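/- arXiv:2105.11250 — 5 statements merged into one kernel-verified Lean document; each statement's English description precedes it below -/
import Mathlib

section
/- Let S and S' be finite subsets of {1,...,n} with |S'| = |S|. Then S' is a static one shift of S (i.e., the sorted position sequences agree except at one index j where p'_j = p_j + 1) if and only if S' ≠ S, the sum of the elements of S' exceeds the sum of the elements of S by exactly 1, and |S \ S'| = 1. -/
def sortedList (S : Finset ℕ) : List ℕ := S.sort (· ≤ ·)

def IsStaticOneShift (S S' : Finset ℕ) : Prop :=
  ∃ j : ℕ, j < (sortedList S).length ∧
    sortedList S' = (sortedList S).set j ((sortedList S).getD j 0 + 1)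

lemma key (L : List ℕ) (j : ℕ) (hj : j < L.length) (x : ℕ) :
    (L[j] ::ₘ ((L.set j x : List ℕ) : Multiset ℕ)) = x ::ₘ (L : Multiset ℕ) := by
  conv_rhs => rw [← List.take_append_drop j L, ← List.getElem_cons_drop hj]
  rw [List.set_eq_take_append_cons_drop, if_pos hj]
  simp only [← Multiset.cons_coe, ← Multiset.coe_add, ← Multiset.singleton_add]
  abel

lemma shift_iff (S S' : Finset ℕ) :
    IsStaticOneShift S S' ↔ ∃ a, a ∈ S ∧ a + 1 ∉ S ∧ S' = insert (a + 1) (S.erase a) := by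
  have hcoeS : ((sortedList S : List ℕ) : Multiset ℕ) = S.val := Finset.sort_eq _ _
  have hcoeS' : ((sortedList S' : List ℕ) : Multiset ℕ) = S'.val := Finset.sort_eq _ _
  have hmemS : ∀ (m : ℕ) (hm : m < (sortedList S).length), (sortedList S)[m] ∈ S := by
    intro m hm
    have : (sortedList S)[m] ∈ sortedList S := List.getElem_mem hm
    exact (Finset.mem_sort _).mp this
  constructor
  · rintro ⟨j, hj, h⟩
    set L := sortedList S with hL
    set a := L[j] with ha
    rw [List.getD_eq_getElem L 0 hj, ← ha] at h
    have haS : a ∈ S := hmemS j hj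
    have hnot : a + 1 ∉ S := by
      intro hmem
      have hmemL : a + 1 ∈ L := (Finset.mem_sort _).mpr hmem
      obtain ⟨k, hk, hk2⟩ := List.getElem_of_mem hmemL
      have hkj : j ≠ k := by
        intro e
        subst e
        have : a = a + 1 := ha.trans hk2
        omega
      have hnd : (sortedList S').Nodup := Finset.sort_nodup _ _
      rw [h] at hnd
      have hlen : (L.set j (a + 1)).length = L.length := L.length_set ..
      have h1 : (L.set j (a + 1)).get ⟨j, by omega⟩ = a + 1 := by
        simp [List.getElem_set]
      have h2 : (L.set j (a + 1)).get ⟨k, by omega⟩ = a + 1 := by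
        simp [List.getElem_set, hkj, hk2]
      have := (hnd.get_inj_iff).mp (h1.trans h2.symm)
      exact hkj (by simpa using congrArg Fin.val this)
    refine ⟨a, haS, hnot, ?_⟩
    have hval : a ::ₘ S'.val = (a + 1) ::ₘ S.val := by
      rw [← hcoeS, ← hcoeS', h]
      exact key L j hj (a + 1)
    have hav : a ∈ S.val := haS
    apply Finset.val_injective
    rw [Finset.insert_val_of_notMem (fun hc => hnot (Finset.mem_of_mem_erase hc)),
      Finset.erase_val]
    have : a ::ₘ S'.val = a ::ₘ ((a + 1) ::ₘ S.val.erase a) := by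
      rw [hval, Multiset.cons_swap, Multiset.cons_erase hav]
    exact (Multiset.cons_inj_right a).mp this
  · rintro ⟨a, haS, hnot, rfl⟩
    have haL : a ∈ sortedList S := (Finset.mem_sort _).mpr haS
    have hj : (sortedList S).idxOf a < (sortedList S).length :=
      List.idxOf_lt_length_iff.mpr haL
    refine ⟨(sortedList S).idxOf a, hj, ?_⟩
    have hget : (sortedList S)[(sortedList S).idxOf a] = a := List.getElem_idxOf hj
    rw [List.getD_eq_getElem (sortedList S) 0 hj, hget]
    refine (fun hp h1 h2 => List.Perm.eq_of_pairwise' (r := (· ≤ ·)) h1 h2 hp) ?_ ?_ ?_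
    · rw [← Multiset.coe_eq_coe, hcoeS']
      have hk := key (sortedList S) ((sortedList S).idxOf a) hj (a + 1)
      rw [hget, hcoeS] at hk
      have hv : (insert (a + 1) (S.erase a)).val = (a + 1) ::ₘ S.val.erase a := by
        rw [Finset.insert_val_of_notMem (fun hc => hnot (Finset.mem_of_mem_erase hc)),
          Finset.erase_val]
      have hthis : a ::ₘ (insert (a + 1) (S.erase a)).val
          = a ::ₘ (((sortedList S).set ((sortedList S).idxOf a) (a + 1) : List ℕ) : Multiset ℕ) := by
        rw [hv, hk, Multiset.cons_swap, Multiset.cons_erase haS]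
      exact (Multiset.cons_inj_right a).mp hthis
    · exact Finset.pairwise_sort _ _
    · have hlt : ∀ (i k : Fin (sortedList S).length), i < k →
          (sortedList S).get i < (sortedList S).get k :=
        List.pairwise_iff_get.mp (List.sortedLT_iff_pairwise.mp (Finset.sortedLT_sort S))
      rw [List.pairwise_iff_get]
      intro i k hik
      have hik' : (i : ℕ) < (k : ℕ) := hik
      have hiL : (i : ℕ) < (sortedList S).length := by simpa using i.2
      have hkL : (k : ℕ) < (sortedList S).length := by simpa using k.2
      have hlt' : (sortedList S)[(i : ℕ)] < (sortedList S)[(k : ℕ)] :=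
        hlt ⟨i, hiL⟩ ⟨k, hkL⟩ hik'
      simp only [List.get_eq_getElem, List.getElem_set]
      split_ifs with h1 h2 h2
      · omega
      · have hia : (sortedList S)[(i : ℕ)] = a := by
          have := hget; simp only [h1] at this; exact this
        have hkS : (sortedList S)[(k : ℕ)] ∈ S := hmemS _ hkL
        have hkne : (sortedList S)[(k : ℕ)] ≠ a + 1 := fun e => hnot (e ▸ hkS)
        omega
      · have hka : (sortedList S)[(k : ℕ)] = a := by
          have := hget; simp only [h2] at this; exact this
        omega
      · exact le_of_lt hlt'

theorem stmt_0 (n : ℕ) (S S' : Finset ℕ) (hS : S ⊆ Finset.Icc 1 n)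
    (hS' : S' ⊆ Finset.Icc 1 n) (hcard : S'.card = S.card) :
    IsStaticOneShift S S' ↔
      S' ≠ S ∧ (∑ i ∈ S', i) = (∑ i ∈ S, i) + 1 ∧ (S \ S').card = 1 := by
  rw [shift_iff]
  constructor
  · rintro ⟨a, haS, hnot, rfl⟩
    have hne : insert (a + 1) (S.erase a) ≠ S := by
      intro e; exact hnot (e ▸ Finset.mem_insert_self _ _)
    refine ⟨hne, ?_, ?_⟩
    · rw [Finset.sum_insert (fun hc => hnot (Finset.mem_of_mem_erase hc)),
        ← Finset.add_sum_erase S (fun i => i) haS]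
      omega
    · have : S \ insert (a + 1) (S.erase a) = {a} := by
        ext x
        simp only [Finset.mem_sdiff, Finset.mem_insert, Finset.mem_erase,
          Finset.mem_singleton, not_or, not_and]
        constructor
        · rintro ⟨hxS, _, h2⟩
          by_contra hxa
          exact (h2 hxa) hxS
        · rintro rfl
          exact ⟨haS, fun e => hnot (e ▸ haS), fun e => absurd rfl e⟩
      rw [this, Finset.card_singleton]
  · rintro ⟨hne, hsum, hone⟩
    obtain ⟨a, ha⟩ := Finset.card_eq_one.mp hone
    have haS : a ∈ S ∧ a ∉ S' := by
      have := ha ▸ Finset.mem_singleton_self a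
      exact Finset.mem_sdiff.mp this
    have hcard2 : (S' \ S).card = 1 := by
      have h1 := Finset.card_sdiff_add_card_inter S S'
      have h2 := Finset.card_sdiff_add_card_inter S' S
      rw [Finset.inter_comm] at h2
      omega
    obtain ⟨b, hb⟩ := Finset.card_eq_one.mp hcard2
    have hbS : b ∈ S' ∧ b ∉ S := by
      have := hb ▸ Finset.mem_singleton_self b
      exact Finset.mem_sdiff.mp this
    have hS'eq : S' = insert b (S.erase a) := by
      ext x
      simp only [Finset.mem_insert, Finset.mem_erase]
      constructor
      · intro hx
        by_cases hxS : x ∈ S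
        · have hxa : x ≠ a := fun e => haS.2 (e ▸ hx)
          exact Or.inr ⟨hxa, hxS⟩
        · have : x ∈ S' \ S := Finset.mem_sdiff.mpr ⟨hx, hxS⟩
          rw [hb, Finset.mem_singleton] at this
          exact Or.inl this
      · rintro (rfl | ⟨hxa, hxS⟩)
        · exact hbS.1
        · by_contra hxS'
          have : x ∈ S \ S' := Finset.mem_sdiff.mpr ⟨hxS, hxS'⟩
          rw [ha, Finset.mem_singleton] at this
          exact hxa this
    have hbe : b ∉ S.erase a := fun hc => hbS.2 (Finset.mem_of_mem_erase hc)
    have hsum1 : ∑ i ∈ S', i = b + ∑ i ∈ S.erase a, i := by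
      rw [hS'eq, Finset.sum_insert hbe]
    have hsum2 : a + ∑ i ∈ S.erase a, i = ∑ i ∈ S, i :=
      Finset.add_sum_erase S (fun i => i) haS.1
    have hba : b = a + 1 := by omega
    exact ⟨a, haS.1, hba ▸ hbS.2, hba ▸ hS'eq⟩
end

section
/- For every m with 1 ≤ m ≤ n and every subset S ⊆ {1,...,n} with |S| = m, there is a finite sequence of subsets {1,...,m} = S_0, S_1, ..., S_t = S such that each S_{i+1} is a static one shift of S_i. -/
lemma key_shift (S : Finset ℕ) (a : ℕ) (ha : a ∈ S) (hb : a + 1 ∉ S) :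
    IsStaticOneShift S (insert (a + 1) (S.erase a)) := by
  classical
  set l := sortedList S with hl
  have hlt : l.Pairwise (· < ·) := S.sortedLT_sort.pairwise
  have hnd : l.Nodup := hlt.nodup
  have hmem : a ∈ l := by
    rw [hl, sortedList, Finset.mem_sort]; exact ha
  set j := l.idxOf a with hjdef
  have hj : j < l.length := List.idxOf_lt_length_iff.2 hmem
  have hgj : l[j] = a := List.getElem_idxOf hj
  have hiff : ∀ x, x ∈ l ↔ x ∈ S := fun x => by
    rw [hl, sortedList]; exact Finset.mem_sort _
  refine ⟨j, hj, ?_⟩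
  have hgd : l.getD j 0 = a := by
    rw [List.getD_eq_getElem?_getD, List.getElem?_eq_getElem hj, hgj]; rfl
  rw [hgd]
  -- the modified list
  set l' := l.set j (a + 1) with hl'
  have hlen : l'.length = l.length := by simp [hl']
  have hget : ∀ (i : ℕ) (hi : i < l'.length), l'[i] = if j = i then a + 1 else l[i]'(hlen ▸ hi) := by
    intro i hi
    simp only [hl', List.getElem_set]
  -- elements after j are > a+1
  have hafter : ∀ (i : ℕ) (hi : i < l.length), j < i → a + 1 < l[i] := by
    intro i hi hji
    have h1 : a < l[i] := by
      have := List.pairwise_iff_getElem.1 hlt j i hj hi hji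
      rwa [hgj] at this
    have h2 : l[i] ≠ a + 1 := by
      intro h
      apply hb
      have hm2 : l[i] ∈ S := (hiff _).1 (List.getElem_mem hi)
      rwa [h] at hm2
    omega
  have hbefore : ∀ (i : ℕ) (hi : i < l.length), i < j → l[i] < a := by
    intro i hi hij
    have := List.pairwise_iff_getElem.1 hlt i j hi hj hij
    rwa [hgj] at this
  have hsort' : l'.Pairwise (· < ·) := by
    rw [List.pairwise_iff_getElem]
    intro i k hi hk hik
    rw [hget i hi, hget k hk]
    have hi' : i < l.length := by rwa [hlen] at hi
    have hk' : k < l.length := by rwa [hlen] at hk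
    by_cases hji : j = i
    · subst hji
      simp only [if_pos rfl, if_neg (by omega : ¬ j = k)]
      exact hafter k hk' hik
    · rw [if_neg hji]
      by_cases hjk : j = k
      · subst hjk
        rw [if_pos rfl]
        have := hbefore i hi' (by omega)
        omega
      · rw [if_neg hjk]
        exact List.pairwise_iff_getElem.1 hlt i k hi' hk' hik
  have hnd' : l'.Nodup := hsort'.nodup
  -- membership characterization
  have hmem' : ∀ x, x ∈ l' ↔ x = a + 1 ∨ (x ∈ l ∧ x ≠ a) := by
    intro x
    constructor
    · intro hx
      obtain ⟨i, hi, hxi⟩ := List.mem_iff_getElem.1 hx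
      rw [hget i hi] at hxi
      by_cases hji : j = i
      · left; rw [if_pos hji] at hxi; omega
      · right
        rw [if_neg hji] at hxi
        have hi' : i < l.length := by rwa [hlen] at hi
        constructor
        · rw [← hxi]; exact List.getElem_mem hi' 
        · intro hxa
          apply hji
          apply hnd.getElem_inj_iff.1
          rw [hgj, hxi]
          exact hxa.symm
    · rintro (rfl | ⟨hxl, hxa⟩)
      · refine List.mem_iff_getElem.2 ⟨j, by omega, ?_⟩
        rw [hget j (by omega), if_pos rfl]
      · obtain ⟨i, hi, hxi⟩ := List.mem_iff_getElem.1 hxl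
        refine List.mem_iff_getElem.2 ⟨i, by omega, ?_⟩
        rw [hget i (by omega)]
        rw [if_neg ?_]
        · exact hxi
        · intro hji
          subst hji
          apply hxa
          rw [← hxi]
          exact hgj
  -- toFinset equality
  have htf : l'.toFinset = insert (a + 1) (S.erase a) := by
    ext x
    rw [List.mem_toFinset, hmem', Finset.mem_insert, Finset.mem_erase, hiff]
    tauto
  have hperm : (sortedList (insert (a + 1) (S.erase a))).Perm l' :=
    List.perm_of_nodup_nodup_toFinset_eq (Finset.sort_nodup _ _) hnd'
      (by rw [sortedList, Finset.sort_toFinset, htf])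
  exact hperm.eq_of_pairwise' (Finset.pairwise_sort _ _) (hsort'.imp le_of_lt)

lemma exists_pred (n m : ℕ) (h1 : 1 ≤ m) (S : Finset ℕ) (hS : S ⊆ Finset.Icc 1 n)
    (hcard : S.card = m) (hne : S ≠ Finset.Icc 1 m) :
    ∃ a ∈ S, 2 ≤ a ∧ a - 1 ∉ S := by
  by_contra hcon
  push_neg at hcon
  apply hne
  have hpos : ∀ x ∈ S, 1 ≤ x ∧ x ≤ n := by
    intro x hx; exact Finset.mem_Icc.1 (hS hx)
  have hdown : ∀ k : ℕ, ∀ x ∈ S, 1 ≤ x - k → x - k ∈ S := by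
    intro k
    induction k with
    | zero => intro x hx _; simpa using hx
    | succ k ih =>
      intro x hx h
      have h1' : x - k ∈ S := ih x hx (by omega)
      have h2' : 2 ≤ x - k := by omega
      have := hcon (x - k) h1' h2'
      have heq : x - k - 1 = x - (k + 1) := by omega
      rwa [heq] at this
  have hne' : S.Nonempty := Finset.card_pos.1 (by omega)
  set M := S.max' hne' with hM
  have hMS : M ∈ S := S.max'_mem hne'
  have hSM : S = Finset.Icc 1 M := by
    apply Finset.Subset.antisymm
    · intro x hx
      rw [Finset.mem_Icc]
      exact ⟨(hpos x hx).1, S.le_max' x hx⟩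
    · intro y hy
      rw [Finset.mem_Icc] at hy
      have := hdown (M - y) M hMS (by omega)
      have heq : M - (M - y) = y := by omega
      rwa [heq] at this
  have : M = m := by
    rw [hSM] at hcard
    rw [Nat.card_Icc] at hcard
    omega
  rw [hSM, this]

theorem stmt_9 (n m : ℕ) (h1 : 1 ≤ m) (h2 : m ≤ n) (S : Finset ℕ)
    (hS : S ⊆ Finset.Icc 1 n) (hcard : S.card = m) :
    Relation.ReflTransGen IsStaticOneShift (Finset.Icc 1 m) S := by
  classical
  suffices H : ∀ k : ℕ, ∀ S : Finset ℕ, S.sum id = k → S ⊆ Finset.Icc 1 n → S.card = m →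
      Relation.ReflTransGen IsStaticOneShift (Finset.Icc 1 m) S from
    H (S.sum id) S rfl hS hcard
  intro k
  induction k using Nat.strong_induction_on with
  | _ k ih =>
    intro S hsum hS hcard
    by_cases hne : S = Finset.Icc 1 m
    · rw [hne]
    · obtain ⟨a, haS, ha2, hnot⟩ := exists_pred n m h1 S hS hcard hne
      set S'' := insert (a - 1) (S.erase a) with hS''
      have hmemS'' : a - 1 ∉ S.erase a := fun h => hnot (Finset.mem_of_mem_erase h)
      have hanot : a ∉ S'' := by
        rw [hS'', Finset.mem_insert]
        push_neg
        exact ⟨by omega, fun h => (Finset.mem_erase.1 h).1 rfl⟩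
      have hstep : IsStaticOneShift S'' S := by
        have h1' : a - 1 ∈ S'' := Finset.mem_insert_self _ _
        have h2' : (a - 1) + 1 ∉ S'' := by rwa [show a - 1 + 1 = a by omega]
        have := key_shift S'' (a - 1) h1' h2'
        have heq : insert (a - 1 + 1) (S''.erase (a - 1)) = S := by
          rw [show a - 1 + 1 = a by omega, hS'', Finset.erase_insert hmemS'',
            Finset.insert_erase haS]
        rwa [heq] at this
      have hcard'' : S''.card = m := by
        rw [hS'', Finset.card_insert_of_notMem hmemS'', Finset.card_erase_of_mem haS, hcard]
        omega
      have hS''sub : S'' ⊆ Finset.Icc 1 n := by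
        intro x hx
        rw [hS'', Finset.mem_insert] at hx
        rcases hx with rfl | hx
        · have := Finset.mem_Icc.1 (hS haS)
          rw [Finset.mem_Icc]; omega
        · exact hS (Finset.mem_of_mem_erase hx)
      have hsum'' : S''.sum id + 1 = k := by
        rw [hS'', Finset.sum_insert hmemS'', ← hsum]
        have := Finset.sum_erase_add S id haS
        simp only [id] at *
        omega
      have hlt : S''.sum id < k := by omega
      exact (ih _ hlt S'' rfl hS''sub hcard'').tail hstep
end

section
/- Define a parent function on nonempty subsets of {1,...,n} as follows: if S = {1,...,m} for some m ≥ 2, parent(S) = {2,...,m}; otherwise parent(S) is the mandatory static one shift parent of S. Then for every nonempty S ⊆ {1,...,n} with S ≠ {1}, iterating the parent function reaches {1} in finitely many steps; i.e., every nonempty subset is reachable from {1} in the resulting rooted tree. -/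
def MandStaticParent (n : ℕ) (T S : Finset ℕ) : Prop :=
  T ⊆ Finset.Icc 1 n ∧ IsStaticOneShift T S ∧
    ∀ U : Finset ℕ, U ⊆ Finset.Icc 1 n → IsStaticOneShift U S →
      T = U ∨ List.Lex (· < ·) (sortedList T) (sortedList U)


def ParentRel (n : ℕ) (S T : Finset ℕ) : Prop :=
  (∃ m : ℕ, 2 ≤ m ∧ S = Finset.Icc 1 m ∧ T = Finset.Icc 2 m) ∨
    ((¬ ∃ m : ℕ, S = Finset.Icc 1 m) ∧ MandStaticParent n T S)

/- ## auxiliary lemmas -/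

lemma set_self (l : List ℕ) (i : ℕ) (h : i < l.length) : l.set i l[i] = l := by
  apply List.ext_getElem
  · simp
  · intro k h1 h2
    simp only [List.getElem_set]
    split
    · next heq => subst heq; rfl
    · rfl

lemma sortedList_sorted (S : Finset ℕ) : (sortedList S).Pairwise (· < ·) :=
  (Finset.sortedLT_sort S).pairwise

lemma mem_sortedList {a : ℕ} {S : Finset ℕ} : a ∈ sortedList S ↔ a ∈ S :=
  Finset.mem_sort _

lemma sortedList_toFinset (S : Finset ℕ) : (sortedList S).toFinset = S :=
  Finset.sort_toFinset S _

lemma sortedList_of_sorted {l : List ℕ} (h : l.Pairwise (· < ·)) :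
    sortedList l.toFinset = l :=
  (List.toFinset_sort (· ≤ ·) h.nodup).2 (h.imp le_of_lt)

/-- setting one entry of a strictly sorted list to a compatible smaller value keeps it sorted -/
lemma sorted_set {l : List ℕ} (hl : l.Pairwise (· < ·)) {j a : ℕ} (hj : j < l.length)
    (h1 : a < l[j]) (h2 : j = 0 ∨ l.getD (j-1) 0 < a) : (l.set j a).Pairwise (· < ·) := by
  rw [List.pairwise_iff_getElem] at hl ⊢
  intro i i' hi hi' hii
  simp only [List.length_set] at hi hi'
  simp only [List.getElem_set]
  rcases eq_or_ne j i with rfl | hji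
  · rw [if_pos rfl, if_neg (by omega : j ≠ i')]
    exact h1.trans (hl j i' hj hi' hii)
  · simp only [if_neg hji]
    rcases eq_or_ne j i' with rfl | hji'
    · simp only [if_pos rfl]
      rcases h2 with h | h
      · omega
      · rw [List.getD_eq_getElem l 0 (by omega : j - 1 < l.length)] at h
        calc l[i] ≤ l[j-1] := by
              rcases eq_or_lt_of_le (by omega : i ≤ j - 1) with h' | h'
              · exact le_of_eq (by congr 1)
              · exact le_of_lt (hl i (j-1) hi (by omega) h')
          _ < a := h
    · simp only [if_neg hji']
      exact hl i i' hi hi' hii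

/-- lex comparison when setting at an earlier index to a smaller value -/
lemma lex_set : ∀ (l : List ℕ) (j j' a b : ℕ) (_ : j < j') (hj : j < l.length)
    (_ : a < l[j]), List.Lex (· < ·) (l.set j a) (l.set j' b)
  | [], j, j', a, b, hjj, hj, ha => by simp at hj
  | x :: t, 0, j', a, b, hjj, hj, ha => by
      obtain ⟨k, rfl⟩ : ∃ k, j' = k + 1 := ⟨j' - 1, by omega⟩
      simp only [List.set_cons_zero, List.set_cons_succ]
      exact List.Lex.rel (by simpa using ha)
  | x :: t, j+1, j', a, b, hjj, hj, ha => by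
      obtain ⟨k, rfl⟩ : ∃ k, j' = k + 1 := ⟨j' - 1, by omega⟩
      simp only [List.set_cons_succ]
      exact List.Lex.cons (lex_set t j k a b (by omega) (by simpa using hj) (by simpa using ha))

def ValidIdx (l : List ℕ) (j : ℕ) : Prop :=
  j < l.length ∧ 2 ≤ l.getD j 0 ∧ (j = 0 ∨ l.getD (j-1) 0 + 1 < l.getD j 0)

/-- if S is not an initial interval, some index is shiftable -/
lemma exists_valid {n : ℕ} {S : Finset ℕ} (hS : S ⊆ Finset.Icc 1 n) (hne : S.Nonempty)
    (hni : ¬ ∃ m : ℕ, S = Finset.Icc 1 m) : ∃ j, ValidIdx (sortedList S) j := by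
  by_contra hc
  push_neg at hc
  apply hni
  obtain ⟨l, hl⟩ : ∃ l, sortedList S = l := ⟨_, rfl⟩
  rw [hl] at hc
  have hlen : 0 < l.length := by
    rw [← hl, sortedList, Finset.length_sort]
    exact Finset.card_pos.2 hne
  have hsort : l.Pairwise (· < ·) := hl ▸ sortedList_sorted S
  rw [List.pairwise_iff_getElem] at hsort
  have hmem : ∀ i (h : i < l.length), 1 ≤ l[i] ∧ l[i] ≤ n := by
    intro i h
    have hx : l[i] ∈ S := mem_sortedList.1 (by rw [hl]; exact List.getElem_mem h)
    simpa using Finset.mem_Icc.1 (hS hx)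
  have key : ∀ i (h : i < l.length), l[i] = i + 1 := by
    intro i
    induction i with
    | zero =>
      intro h
      have h2 := hmem 0 h
      by_contra hne0
      exact hc 0 ⟨h, by rw [List.getD_eq_getElem l 0 h]; omega, Or.inl rfl⟩
    | succ i ih =>
      intro h
      have hi : i < l.length := by omega
      have hiv := ih hi
      have hlt : l[i] < l[i+1] := hsort i (i+1) hi h (by omega)
      by_contra hne1
      refine hc (i+1) ⟨h, ?_, Or.inr ?_⟩
      · rw [List.getD_eq_getElem l 0 h]; omega
      · simp only [Nat.add_sub_cancel]
        rw [List.getD_eq_getElem l 0 h, List.getD_eq_getElem l 0 hi]; omega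
  refine ⟨l.length, ?_⟩
  ext x
  simp only [Finset.mem_Icc]
  constructor
  · intro hx
    have hx' : x ∈ l := by rw [← hl]; exact mem_sortedList.2 hx
    obtain ⟨i, hi, rfl⟩ := List.mem_iff_getElem.1 hx'
    rw [key i hi]
    exact ⟨by omega, by omega⟩
  · intro ⟨hx1, hx2⟩
    have hx' : x ∈ l :=
      List.mem_iff_getElem.2 ⟨x - 1, by omega, by rw [key (x-1) (by omega)]; omega⟩
    rw [← hl] at hx'
    exact mem_sortedList.1 hx' 

lemma sum_eq_sum_sortedList (S : Finset ℕ) : ∑ x ∈ S, x = (sortedList S).sum := by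
  have h : (↑(sortedList S) : Multiset ℕ) = S.val := Finset.sort_eq S _
  rw [← Multiset.sum_coe, h, Finset.sum]
  exact congrArg Multiset.sum (Multiset.map_id' _)

/-- the main step: a non-interval set has a parent with smaller sum -/
lemma step {n : ℕ} {S : Finset ℕ} (hS : S ⊆ Finset.Icc 1 n) (hne : S.Nonempty)
    (hni : ¬ ∃ m : ℕ, S = Finset.Icc 1 m) :
    ∃ T : Finset ℕ, ParentRel n S T ∧ T ⊆ Finset.Icc 1 n ∧ T.Nonempty ∧
      ∑ x ∈ T, x < ∑ x ∈ S, x := by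
  classical
  obtain ⟨l, hl⟩ : ∃ l, sortedList S = l := ⟨_, rfl⟩
  have hex : ∃ j, ValidIdx l j := by rw [← hl]; exact exists_valid hS hne hni
  obtain ⟨j, ⟨hjlen, hj2, hjprev⟩, hjmin⟩ :
      ∃ j, ValidIdx l j ∧ ∀ i, i < j → ¬ ValidIdx l i :=
    ⟨Nat.find hex, Nat.find_spec hex, fun i hi => Nat.find_min hex hi⟩
  have hj2' : 2 ≤ l[j] := by rwa [List.getD_eq_getElem l 0 hjlen] at hj2
  have hsortl : l.Pairwise (· < ·) := hl ▸ sortedList_sorted S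
  have hsort' : (l.set j (l[j]-1)).Pairwise (· < ·) := by
    apply sorted_set hsortl hjlen (by omega)
    rcases hjprev with h | h
    · exact Or.inl h
    · right
      rw [List.getD_eq_getElem l 0 hjlen] at h
      omega
  set T := (l.set j (l[j]-1)).toFinset with hTdef
  have hsT : sortedList T = l.set j (l[j]-1) := sortedList_of_sorted hsort'
  -- T ⊆ Icc 1 n
  have hljn : l[j] ≤ n := by
    have hmem : l[j] ∈ S := mem_sortedList.1 (by rw [hl]; exact List.getElem_mem hjlen)
    exact (Finset.mem_Icc.1 (hS hmem)).2
  have hTsub : T ⊆ Finset.Icc 1 n := by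
    intro x hx
    rw [hTdef, List.mem_toFinset] at hx
    rcases List.mem_or_eq_of_mem_set hx with h | rfl
    · exact hS (mem_sortedList.1 (by rw [hl]; exact h))
    · exact Finset.mem_Icc.2 ⟨by omega, by omega⟩
  have haT : l[j]-1 ∈ T := by
    rw [hTdef, List.mem_toFinset]
    exact List.mem_iff_getElem.2 ⟨j, by simpa using hjlen, by rw [List.getElem_set, if_pos rfl]⟩
  -- IsStaticOneShift T S
  have hshift : IsStaticOneShift T S := by
    refine ⟨j, ?_, ?_⟩
    · rw [hsT]; simpa using hjlen
    · rw [hsT, hl]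
      have hgd : (l.set j (l[j]-1)).getD j 0 = l[j]-1 := by
        rw [List.getD_eq_getElem _ 0 (by simpa using hjlen), List.getElem_set, if_pos rfl]
      rw [hgd, List.set_set]
      have h1 : l[j] - 1 + 1 = l[j] := by omega
      rw [h1, set_self]
  -- minimality
  have hmand : MandStaticParent n T S := by
    refine ⟨hTsub, hshift, ?_⟩
    intro U hU hshU
    obtain ⟨j', hj'len, hUset⟩ := hshU
    obtain ⟨lu, hlu⟩ : ∃ lu, sortedList U = lu := ⟨_, rfl⟩
    rw [hlu] at hUset hj'len
    rw [hl] at hUset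
    have hlen : l.length = lu.length := by rw [hUset]; simp
    have hj'l : j' < l.length := by omega
    have hugete : lu[j']'hj'len = lu.getD j' 0 := (List.getD_eq_getElem lu 0 hj'len).symm
    have hlju : l[j']'hj'l = lu.getD j' 0 + 1 := by
      rw [List.getElem_of_eq hUset hj'l, List.getElem_set, if_pos rfl]
    have hluset : lu = l.set j' (lu.getD j' 0) := by
      rw [hUset, List.set_set, ← hugete, set_self]
    have hu1 : 1 ≤ lu.getD j' 0 := by
      have h3 : lu[j']'hj'len ∈ U := mem_sortedList.1 (by rw [hlu]; exact List.getElem_mem hj'len)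
      have := (Finset.mem_Icc.1 (hU h3)).1
      omega
    have hvalid' : ValidIdx l j' := by
      refine ⟨hj'l, ?_, ?_⟩
      · rw [List.getD_eq_getElem l 0 hj'l, hlju]; omega
      · rcases Nat.eq_zero_or_pos j' with h0 | h0
        · exact Or.inl h0
        right
        rw [List.getD_eq_getElem l 0 hj'l,
          List.getD_eq_getElem l 0 (by omega : j'-1 < l.length), hlju]
        have husort : lu.Pairwise (· < ·) := hlu ▸ sortedList_sorted U
        rw [List.pairwise_iff_getElem] at husort
        have hlt := husort (j'-1) j' (by omega) hj'len (by omega)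
        rw [hugete] at hlt
        have heq : lu[j'-1]'(by omega) = l[j'-1]'(by omega) := by
          rw [List.getElem_of_eq hluset (by omega), List.getElem_set, if_neg (by omega)]
        rw [heq] at hlt
        omega
    have hjj' : j ≤ j' := le_of_not_gt fun hcon => hjmin j' hcon hvalid'
    rcases eq_or_lt_of_le hjj' with rfl | hlt2
    · left
      have hval : lu.getD j 0 = l[j] - 1 := by omega
      have hTU : sortedList T = sortedList U := by rw [hlu, hsT, hluset, hval]
      rw [← sortedList_toFinset T, hTU]
      exact sortedList_toFinset U
    · right
      rw [hsT, hlu, hluset]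
      exact lex_set l j j' (l[j]-1) (lu.getD j' 0) hlt2 hjlen (by omega)
  -- sums
  have hsum : ∑ x ∈ T, x < ∑ x ∈ S, x := by
    rw [sum_eq_sum_sortedList, sum_eq_sum_sortedList, hsT, hl, List.sum_set, if_pos hjlen]
    have h1 := List.sum_take_add_sum_drop l j
    rw [List.drop_eq_getElem_cons hjlen, List.sum_cons] at h1
    omega
  exact ⟨T, Or.inr ⟨hni, hmand⟩, hTsub, ⟨l[j]-1, haT⟩, hsum⟩

lemma main_aux (n : ℕ) : ∀ k (S : Finset ℕ), (∑ x ∈ S, x) = k → S ⊆ Finset.Icc 1 n →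
    S.Nonempty → S ≠ {1} → Relation.TransGen (fun A B => ParentRel n A B) S {1} := by
  intro k
  induction k using Nat.strong_induction_on with
  | _ k IH =>
    intro S hk hS hne h1
    by_cases hI : ∃ m : ℕ, S = Finset.Icc 1 m
    · obtain ⟨m, rfl⟩ := hI
      have hm1 : 1 ≤ m := by
        obtain ⟨x, hx⟩ := hne
        have := Finset.mem_Icc.1 hx; omega
      have hm2 : 2 ≤ m := by
        rcases eq_or_lt_of_le hm1 with rfl | h
        · exact absurd (by norm_num : Finset.Icc 1 1 = ({1} : Finset ℕ)) h1
        · omega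
      set T := Finset.Icc 2 m with hT
      have hPar : ParentRel n (Finset.Icc 1 m) T := Or.inl ⟨m, hm2, rfl, rfl⟩
      have h2T : 2 ∈ T := Finset.mem_Icc.2 ⟨le_refl 2, hm2⟩
      have hTne : T.Nonempty := ⟨2, h2T⟩
      have hT1 : T ≠ {1} := by
        intro h; rw [h] at h2T; simp at h2T
      have hTsub : T ⊆ Finset.Icc 1 n := by
        intro x hx
        have := Finset.mem_Icc.1 hx
        exact hS (Finset.mem_Icc.2 ⟨by omega, this.2⟩)
      have hins : Finset.Icc 1 m = insert 1 T := by
        ext x; simp only [Finset.mem_Icc, Finset.mem_insert, hT, Finset.mem_Icc]; omega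
      have hsum : ∑ x ∈ T, x < k := by
        rw [← hk, hins, Finset.sum_insert (by simp [hT])]
        omega
      exact Relation.TransGen.head hPar
        (IH _ hsum T rfl hTsub hTne hT1)
    · obtain ⟨T, hPar, hTsub, hTne, hsum⟩ := step hS hne hI
      by_cases hT1 : T = {1}
      · rw [hT1] at hPar
        exact Relation.TransGen.single hPar
      · exact Relation.TransGen.head hPar
          (IH _ (by omega) T rfl hTsub hTne hT1)

theorem stmt_10 (n : ℕ) (S : Finset ℕ) (hS : S ⊆ Finset.Icc 1 n)
    (hne : S.Nonempty) (h1 : S ≠ {1}) :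
    Relation.TransGen (fun A B => ParentRel n A B) S {1} :=
  main_aux n _ S rfl hS hne h1
end

section
/- Define the Eppstein child relation on nonempty finite subsets of positive integers bounded by n: the children of S are C1(S) = (S \ {max S}) ∪ {max S + 1} and C2(S) = S ∪ {max S + 1}, defined whenever max S + 1 ≤ n. Then every nonempty subset of {1,...,n} is obtained from the root {1} by a unique finite sequence of child steps; i.e., the relation forms a tree on all nonempty subsets of {1,...,n} rooted at {1}. -/
def EppChild (n : ℕ) (S T : Finset ℕ) : Prop :=
  ∃ M : ℕ, M ∈ S ∧ (∀ x ∈ S, x ≤ M) ∧ M + 1 ≤ n ∧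
    (T = insert (M + 1) (S.erase M) ∨ T = insert (M + 1) S)

lemma epp_parent_shape {n : ℕ} {T S : Finset ℕ} (h : EppChild n T S) :
    ∃ M, (M + 1) ∈ S ∧ (∀ x ∈ S, x ≤ M + 1) ∧
      ((M ∉ S ∧ T = insert M (S.erase (M + 1))) ∨ (M ∈ S ∧ T = S.erase (M + 1))) := by
  obtain ⟨M, hM, hmax, _, hcase⟩ := h
  have hM1T : M + 1 ∉ T := fun h => by have := hmax _ h; omega
  refine ⟨M, ?_, ?_, ?_⟩
  · rcases hcase with h | h <;> simp [h]
  · intro x hx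
    rcases hcase with h | h <;> rw [h] at hx <;> simp at hx
    · rcases hx with hx | ⟨_, hx⟩
      · omega
      · exact le_trans (hmax _ hx) (Nat.le_succ M)
    · rcases hx with hx | hx
      · omega
      · exact le_trans (hmax _ hx) (Nat.le_succ M)
  · rcases hcase with h | h
    · left
      have hnot : M + 1 ∉ T.erase M := fun hx => hM1T (Finset.mem_of_mem_erase hx)
      constructor
      · rw [h]
        simp only [Finset.mem_insert, Finset.mem_erase]
        push_neg
        exact ⟨by omega, fun hx _ => (hx rfl).elim⟩
      · rw [h, Finset.erase_insert hnot, Finset.insert_erase hM]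
    · right
      exact ⟨h ▸ Finset.mem_insert_of_mem hM, by rw [h, Finset.erase_insert hM1T]⟩

lemma epp_parent_unique {n : ℕ} {T T' S : Finset ℕ}
    (h : EppChild n T S) (h' : EppChild n T' S) : T = T' := by
  obtain ⟨M, hMS, hmax, hc⟩ := epp_parent_shape h
  obtain ⟨M', hMS', hmax', hc'⟩ := epp_parent_shape h'
  have hMM : M = M' := by
    have := hmax _ hMS'
    have := hmax' _ hMS
    omega
  subst hMM
  rcases hc with ⟨hn, hT⟩ | ⟨hm, hT⟩ <;> rcases hc' with ⟨hn', hT'⟩ | ⟨hm', hT'⟩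
  · rw [hT, hT']
  · exact absurd hm' hn
  · exact absurd hm hn'
  · rw [hT, hT']

lemma epp_parent_exists {n : ℕ} {S : Finset ℕ} (hS : S ⊆ Finset.Icc 1 n)
    (hne : S.Nonempty) (h1 : S ≠ {1}) :
    ∃ T, T ⊆ Finset.Icc 1 n ∧ EppChild n T S ∧ T.sum id < S.sum id := by
  set m := S.max' hne with hm
  have hmS : m ∈ S := S.max'_mem hne
  have hmax : ∀ x ∈ S, x ≤ m := fun x hx => S.le_max' x hx
  have hbd : ∀ x ∈ S, 1 ≤ x ∧ x ≤ n := by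
    intro x hx; have := hS hx; simp [Finset.mem_Icc] at this; exact this
  have hm2 : 2 ≤ m := by
    by_contra hc
    apply h1
    apply Finset.Subset.antisymm
    · intro x hx
      have h1x := (hbd x hx).1
      have := hmax x hx
      have : x = 1 := by omega
      simp [this]
    · intro x hx
      simp at hx
      have h1m := (hbd m hmS).1
      have : m = 1 := by omega
      rw [hx, ← this]; exact hmS
  have hmn : m ≤ n := (hbd m hmS).2
  have hsum : m + (S.erase m).sum id = S.sum id := Finset.add_sum_erase S id hmS
  by_cases hcase : m - 1 ∈ S
  · refine ⟨S.erase m, fun x hx => hS (Finset.mem_of_mem_erase hx), ⟨m - 1, ?_, ?_, ?_, ?_⟩, ?_⟩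
    · exact Finset.mem_erase.mpr ⟨by omega, hcase⟩
    · intro x hx
      rw [Finset.mem_erase] at hx
      have := hmax x hx.2
      have := hx.1
      omega
    · omega
    · right
      rw [show m - 1 + 1 = m by omega, Finset.insert_erase hmS]
    · omega
  · refine ⟨insert (m - 1) (S.erase m), ?_, ⟨m - 1, ?_, ?_, ?_, ?_⟩, ?_⟩
    · intro x hx
      rcases Finset.mem_insert.mp hx with h | h
      · simp [Finset.mem_Icc]; omega
      · exact hS (Finset.mem_of_mem_erase h)
    · simp
    · intro x hx
      rcases Finset.mem_insert.mp hx with h | h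
      · omega
      · rw [Finset.mem_erase] at h
        have := hmax x h.2
        have := h.1
        omega
    · omega
    · left
      have hnot : m - 1 ∉ S.erase m := fun h => hcase (Finset.mem_of_mem_erase h)
      rw [show m - 1 + 1 = m by omega, Finset.erase_insert hnot, Finset.insert_erase hmS]
    · have hnot : m - 1 ∉ S.erase m := fun h => hcase (Finset.mem_of_mem_erase h)
      rw [Finset.sum_insert hnot]
      simp only [id] at hsum ⊢
      omega

theorem stmt_14 (n : ℕ) :
    (∀ S : Finset ℕ, S ⊆ Finset.Icc 1 n → S.Nonempty →
      Relation.ReflTransGen (EppChild n) {1} S) ∧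
    (∀ S : Finset ℕ, S ⊆ Finset.Icc 1 n → S.Nonempty → S ≠ {1} →
      ∃! T : Finset ℕ, T ⊆ Finset.Icc 1 n ∧ EppChild n T S) := by
  constructor
  · have key : ∀ k, ∀ S : Finset ℕ, S.sum id = k → S ⊆ Finset.Icc 1 n → S.Nonempty →
        Relation.ReflTransGen (EppChild n) {1} S := by
      intro k
      induction k using Nat.strong_induction_on with
      | _ k ih =>
        intro S hk hS hne
        by_cases h1 : S = {1}
        · rw [h1]
        · obtain ⟨T, hTsub, hchild, hlt⟩ := epp_parent_exists hS hne h1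
          have hTne : T.Nonempty := by
            obtain ⟨M, hM, _⟩ := hchild
            exact ⟨M, hM⟩
          exact Relation.ReflTransGen.tail
            (ih (T.sum id) (hk ▸ hlt) T rfl hTsub hTne) hchild
    intro S hS hne
    exact key (S.sum id) S rfl hS hne
  · intro S hS hne h1
    obtain ⟨T, hTsub, hchild, _⟩ := epp_parent_exists hS hne h1
    exact ⟨T, ⟨hTsub, hchild⟩, fun T' ⟨_, hc'⟩ => epp_parent_unique hc' hchild⟩
end

section
/- Let R : {1,...,n} → ℝ be monotone nondecreasing and nonnegative, and consider the final DAG parent function (parent of {1,...,m}, m ≥ 2, is {2,...,m}; parent of any other S ≠ {1} is its mandatory static parent). If there is a directed path from node T to node S (i.e., T is an iterated parent of S), then ∑_{i ∈ T} R(i) ≤ ∑_{i ∈ S} R(i). -/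
lemma sum_sortedList (R : ℕ → ℝ) (S : Finset ℕ) :
    ((sortedList S).map R).sum = ∑ i ∈ S, R i := by
  unfold sortedList
  rw [List.Perm.sum_eq (List.Perm.map R (Finset.sort_perm_toList S _))]
  exact Finset.sum_map_toList S R

lemma sum_map_set_le (R : ℕ → ℝ) (hR : Monotone R) :
    ∀ (l : List ℕ) (j : ℕ), j < l.length →
      (l.map R).sum ≤ ((l.set j (l.getD j 0 + 1)).map R).sum := by
  intro l
  induction l with
  | nil => intro j hj; simp at hj
  | cons a t ih =>
    intro j hj
    cases j with
    | zero =>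
      simp only [List.set, List.getD_cons_zero, List.map_cons, List.sum_cons]
      exact add_le_add (hR (Nat.le_succ a)) le_rfl
    | succ j =>
      simp only [List.set, List.map_cons, List.sum_cons]
      have : t.getD j 0 = (a :: t).getD (j+1) 0 := rfl
      rw [← this]
      exact add_le_add le_rfl (ih j (by simpa using hj))

lemma parent_sum_le (n : ℕ) (R : ℕ → ℝ) (hR : Monotone R) (hpos : ∀ i, 0 ≤ R i)
    (A B : Finset ℕ) (h : ParentRel n A B) : (∑ i ∈ B, R i) ≤ ∑ i ∈ A, R i := by
  rcases h with ⟨m, hm, hA, hB⟩ | ⟨-, -, ⟨j, hj, hset⟩, -⟩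
  · subst hA hB
    exact Finset.sum_le_sum_of_subset_of_nonneg
      (Finset.Icc_subset_Icc (by norm_num) le_rfl) (fun i _ _ => hpos i)
  · rw [← sum_sortedList R A, ← sum_sortedList R B, hset]
    exact sum_map_set_le R hR _ j hj

theorem stmt_16 (n : ℕ) (R : ℕ → ℝ) (hR : Monotone R) (hpos : ∀ i, 0 ≤ R i)
    (S T : Finset ℕ)
    (h : Relation.TransGen (fun A B => ParentRel n A B) S T) :
    (∑ i ∈ T, R i) ≤ ∑ i ∈ S, R i := by
  induction h with
  | single h => exact parent_sum_le n R hR hpos _ _ h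
  | tail _ h ih => exact le_trans (parent_sum_le n R hR hpos _ _ h) ih
end
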